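/- Let M be an n×n matrix over RatFunc ℂ all of whose entries have intDegree ≤ 0, and let ε > 0. Then the eigenvalue-perturbation definition and the resolvent definition of the ε-pseudospectrum of M agree: closure {λ ∈ ℂ : there exists v ∈ ℂ^n with Euclidean norm ‖v‖ = 1 such that, setting w := (M - X • 1).mulVec (fun i => RatFunc.C (v i)), one has (w i).denom.eval λ ≠ 0 for every i and the Euclidean norm of the vector (fun i => RatFunc.eval (RingHom.id ℂ) λ (w i)) is < ε} equals closure {λ ∈ dom(N) : ‖N(λ)‖ > ε⁻¹}, where N := (M - X • 1)⁻¹. -/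

import Mathlib

set_option synthInstance.maxHeartbeats 1000000
set_option maxHeartbeats 1000000

open Matrix

/-- The L2 operator norm of a complex matrix (the norm induced by the Euclidean norm). -/
noncomputable def l2OpNorm {a b : Type} [Fintype a] [Fintype b] [DecidableEq b]
    (A : Matrix a b ℂ) : ℝ :=
  ‖LinearMap.toContinuousLinearMap (Matrix.toEuclideanLin A)‖

/-- Entrywise evaluation of a matrix over `RatFunc ℂ` at `lam`. -/
noncomputable def evalMat {a b : Type} (A : Matrix a b (RatFunc ℂ)) (lam : ℂ) : Matrix a b ℂ :=
  Matrix.of fun i j => RatFunc.eval (RingHom.id ℂ) lam (A i j)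

/-- The ε-pseudospectrum of a matrix over `RatFunc ℂ`, defined via the resolvent
`N = (A - X•1)⁻¹` and the L2 operator norm. -/
noncomputable def pseudoSpec {a : Type} [Fintype a] [DecidableEq a]
    (A : Matrix a a (RatFunc ℂ)) (eps : ℝ) : Set ℂ :=
  closure {lam : ℂ |
    (∀ i j, (((A - (RatFunc.X : RatFunc ℂ) • 1)⁻¹) i j).denom.eval lam ≠ 0) ∧
    eps⁻¹ < l2OpNorm (evalMat (A - (RatFunc.X : RatFunc ℂ) • 1)⁻¹ lam)}

namespace PS

open Polynomial RatFunc

/-! ### Evaluability of rational functions at a point -/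

/-- `f` is evaluable at `lam`. -/
def Ok (lam : ℂ) (f : RatFunc ℂ) : Prop := f.denom.eval lam ≠ 0

noncomputable def ev (lam : ℂ) (f : RatFunc ℂ) : ℂ := RatFunc.eval (RingHom.id ℂ) lam f

lemma ok_dvd {lam : ℂ} {p q : ℂ[X]} (h : p ∣ q) (hq : q.eval lam ≠ 0) : p.eval lam ≠ 0 := by
  obtain ⟨r, rfl⟩ := h
  simp only [Polynomial.eval_mul, ne_eq, mul_eq_zero] at hq
  exact fun h0 => hq (Or.inl h0)

lemma ok_add {lam : ℂ} {x y : RatFunc ℂ} (hx : Ok lam x) (hy : Ok lam y) : Ok lam (x + y) :=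
  ok_dvd (denom_add_dvd x y) (by simp [Polynomial.eval_mul]; exact ⟨hx, hy⟩)

lemma ok_mul {lam : ℂ} {x y : RatFunc ℂ} (hx : Ok lam x) (hy : Ok lam y) : Ok lam (x * y) :=
  ok_dvd (denom_mul_dvd x y) (by simp [Polynomial.eval_mul]; exact ⟨hx, hy⟩)

lemma ok_C (lam : ℂ) (c : ℂ) : Ok lam (RatFunc.C c) := by
  simp [Ok, RatFunc.denom_C]

lemma ok_X (lam : ℂ) : Ok lam (RatFunc.X) := by simp [Ok, RatFunc.denom_X]

lemma ok_one (lam : ℂ) : Ok lam 1 := by simpa using ok_C lam 1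

lemma ok_zero (lam : ℂ) : Ok lam 0 := by simpa using ok_C lam 0

lemma neg_eq_C_mul (x : RatFunc ℂ) : -x = RatFunc.C (-1) * x := by
  simp [map_neg]

lemma ok_neg {lam : ℂ} {x : RatFunc ℂ} (hx : Ok lam x) : Ok lam (-x) := by
  rw [neg_eq_C_mul]; exact ok_mul (ok_C _ _) hx

lemma ok_sub {lam : ℂ} {x y : RatFunc ℂ} (hx : Ok lam x) (hy : Ok lam y) : Ok lam (x - y) := by
  rw [sub_eq_add_neg]; exact ok_add hx (ok_neg hy)

lemma ev_add {lam : ℂ} {x y : RatFunc ℂ} (hx : Ok lam x) (hy : Ok lam y) :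
    ev lam (x + y) = ev lam x + ev lam y :=
  RatFunc.eval_add (RingHom.id ℂ) lam hx hy

lemma ev_mul {lam : ℂ} {x y : RatFunc ℂ} (hx : Ok lam x) (hy : Ok lam y) :
    ev lam (x * y) = ev lam x * ev lam y :=
  RatFunc.eval_mul (RingHom.id ℂ) lam hx hy

lemma ev_C (lam : ℂ) (c : ℂ) : ev lam (RatFunc.C c) = c := RatFunc.eval_C _ _

lemma ev_X (lam : ℂ) : ev lam RatFunc.X = lam := RatFunc.eval_X _ _

lemma ev_one (lam : ℂ) : ev lam 1 = 1 := RatFunc.eval_one _ _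

lemma ev_zero (lam : ℂ) : ev lam 0 = 0 := RatFunc.eval_zero _ _

lemma ev_neg {lam : ℂ} {x : RatFunc ℂ} (hx : Ok lam x) : ev lam (-x) = -ev lam x := by
  rw [neg_eq_C_mul, ev_mul (ok_C _ _) hx, ev_C]; ring

lemma ev_sub {lam : ℂ} {x y : RatFunc ℂ} (hx : Ok lam x) (hy : Ok lam y) :
    ev lam (x - y) = ev lam x - ev lam y := by
  rw [sub_eq_add_neg, ev_add hx (ok_neg hy), ev_neg hy]; ring

lemma ok_sum {lam : ℂ} {ι : Type*} (s : Finset ι) (f : ι → RatFunc ℂ)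
    (h : ∀ i ∈ s, Ok lam (f i)) : Ok lam (∑ i ∈ s, f i) := by
  classical
  induction s using Finset.induction_on with
  | empty => simpa using ok_zero lam
  | insert _ _ hnot ih =>
      rw [Finset.sum_insert hnot]
      exact ok_add (h _ (Finset.mem_insert_self _ _))
        (ih fun i hi => h i (Finset.mem_insert_of_mem hi))

lemma ev_sum {lam : ℂ} {ι : Type*} (s : Finset ι) (f : ι → RatFunc ℂ)
    (h : ∀ i ∈ s, Ok lam (f i)) : ev lam (∑ i ∈ s, f i) = ∑ i ∈ s, ev lam (f i) := by
  classical
  induction s using Finset.induction_on with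
  | empty => simpa using ev_zero lam
  | insert _ _ hnot ih =>
      rw [Finset.sum_insert hnot, Finset.sum_insert hnot,
        ev_add (h _ (Finset.mem_insert_self _ _))
          (ok_sum _ _ fun i hi => h i (Finset.mem_insert_of_mem hi)),
        ih fun i hi => h i (Finset.mem_insert_of_mem hi)]

/-! ### intDegree lemmas and nonvanishing of the determinant -/

lemma intDegree_add_right {x y : RatFunc ℂ} (hy : y ≠ 0)
    (h : x ≠ 0 → x.intDegree < y.intDegree) :
    x + y ≠ 0 ∧ (x + y).intDegree = y.intDegree := by
  by_cases hx : x = 0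
  · simp [hx, hy]
  have hlt := h hx
  have hxy : x + y ≠ 0 := by
    intro h0
    have hyx : y = -x := by linear_combination h0
    rw [hyx, RatFunc.intDegree_neg] at hlt
    exact lt_irrefl _ hlt
  refine ⟨hxy, le_antisymm ?_ ?_⟩
  · have := RatFunc.intDegree_add_le hy hxy
    omega
  · have hx' : (-x) ≠ 0 := neg_ne_zero.mpr hx
    have hsum : (x + y) + (-x) ≠ 0 := by simpa using hy
    have := RatFunc.intDegree_add_le hx' hsum
    rw [show x + y + -x = y by ring, RatFunc.intDegree_neg] at this
    omega

lemma intDegree_sum_le {ι : Type*} (s : Finset ι) (f : ι → RatFunc ℂ) (d : ℤ)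
    (h : ∀ i ∈ s, f i ≠ 0 → (f i).intDegree ≤ d)
    (hs : (∑ i ∈ s, f i) ≠ 0) : (∑ i ∈ s, f i).intDegree ≤ d := by
  classical
  induction s using Finset.induction_on with
  | empty => simp at hs
  | @insert a s hnot ih =>
      rw [Finset.sum_insert hnot] at hs ⊢
      by_cases h0 : f a = 0
      · rw [h0, zero_add] at hs ⊢
        exact ih (fun i hi => h i (Finset.mem_insert_of_mem hi)) hs
      by_cases hrest : (∑ i ∈ s, f i) = 0
      · rw [hrest, add_zero] at hs ⊢
        exact h a (Finset.mem_insert_self _ _) h0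
      have := RatFunc.intDegree_add_le hrest hs
      have h1 := h a (Finset.mem_insert_self _ _) h0
      have h2 := ih (fun i hi => h i (Finset.mem_insert_of_mem hi)) hrest
      omega

lemma intDegree_prod {ι : Type*} (s : Finset ι) (f : ι → RatFunc ℂ)
    (h : ∀ i ∈ s, f i ≠ 0) :
    (∏ i ∈ s, f i).intDegree = ∑ i ∈ s, (f i).intDegree := by
  classical
  induction s using Finset.induction_on with
  | empty => simp [RatFunc.intDegree_one]
  | @insert a s hnot ih =>
      rw [Finset.prod_insert hnot, Finset.sum_insert hnot,
        RatFunc.intDegree_mul (h a (Finset.mem_insert_self _ _))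
          (Finset.prod_ne_zero_iff.mpr fun i hi => h i (Finset.mem_insert_of_mem hi)),
        ih (fun i hi => h i (Finset.mem_insert_of_mem hi))]

variable {n : ℕ}

lemma apply_sub_smul (M : Matrix (Fin n) (Fin n) (RatFunc ℂ)) (i j : Fin n) :
    (M - (RatFunc.X : RatFunc ℂ) • 1) i j
      = M i j - if i = j then RatFunc.X else 0 := by
  by_cases h : i = j <;>
    simp [Matrix.sub_apply, Matrix.smul_apply, Matrix.one_apply, h]

lemma diag_ne_zero {M : Matrix (Fin n) (Fin n) (RatFunc ℂ)}
    (hdeg : ∀ i j, (M i j).intDegree ≤ 0) (i : Fin n) :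
    (M - (RatFunc.X : RatFunc ℂ) • 1) i i ≠ 0 ∧
      ((M - (RatFunc.X : RatFunc ℂ) • 1) i i).intDegree = 1 := by
  have hX : (-RatFunc.X : RatFunc ℂ) ≠ 0 := by
    simp [RatFunc.X_ne_zero]
  have h := intDegree_add_right (x := M i i) (y := -RatFunc.X) hX
    (fun _ => by
      rw [RatFunc.intDegree_neg, RatFunc.intDegree_X]
      exact lt_of_le_of_lt (hdeg i i) one_pos)
  rw [apply_sub_smul, if_pos rfl]
  constructor
  · rw [sub_eq_add_neg]; exact h.1
  · rw [sub_eq_add_neg, h.2, RatFunc.intDegree_neg, RatFunc.intDegree_X]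

lemma det_ne_zero {M : Matrix (Fin n) (Fin n) (RatFunc ℂ)}
    (hdeg : ∀ i j, (M i j).intDegree ≤ 0) :
    (M - (RatFunc.X : RatFunc ℂ) • 1).det ≠ 0 := by
  classical
  set A := M - (RatFunc.X : RatFunc ℂ) • 1 with hA
  rcases Nat.eq_zero_or_pos n with hn | hn
  · subst hn
    simp [Matrix.det_fin_zero]
  have hentry : ∀ i j : Fin n, A i j ≠ 0 → (A i j).intDegree ≤ 1 := by
    intro i j h0
    by_cases h : i = j
    · subst h; exact le_of_eq (diag_ne_zero hdeg i).2
    · rw [hA, apply_sub_smul, if_neg h, sub_zero] at h0 ⊢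
      exact le_trans (hdeg i j) zero_le_one
  have hoff : ∀ i j : Fin n, i ≠ j → A i j ≠ 0 → (A i j).intDegree ≤ 0 := by
    intro i j h h0
    rw [hA, apply_sub_smul, if_neg h, sub_zero] at h0 ⊢
    exact hdeg i j
  set t : Equiv.Perm (Fin n) → RatFunc ℂ :=
    fun σ => Equiv.Perm.sign σ • ∏ i, A (σ i) i with ht
  have hdet : A.det = ∑ σ : Equiv.Perm (Fin n), t σ := Matrix.det_apply A
  have hid : t 1 ≠ 0 ∧ (t 1).intDegree = (n : ℤ) := by
    have hprod : (∏ i, A i i) ≠ 0 :=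
      Finset.prod_ne_zero_iff.mpr fun i _ => (diag_ne_zero hdeg i).1
    have hdeg1 : (∏ i, A i i).intDegree = (n : ℤ) := by
      rw [intDegree_prod _ _ fun i _ => (diag_ne_zero hdeg i).1,
        Finset.sum_congr rfl fun i _ => (diag_ne_zero hdeg i).2]
      simp
    constructor
    · simpa [ht] using hprod
    · simpa [ht] using hdeg1
  have hne : ∀ σ : Equiv.Perm (Fin n), σ ≠ 1 → t σ ≠ 0 → (t σ).intDegree ≤ (n : ℤ) - 1 := by
    intro σ hσ h0
    have hprod0 : (∏ i, A (σ i) i) ≠ 0 := by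
      intro h; rw [ht] at h0; simp [h] at h0
    have hfac : ∀ i : Fin n, A (σ i) i ≠ 0 := fun i =>
      Finset.prod_ne_zero_iff.mp hprod0 i (Finset.mem_univ i)
    obtain ⟨i₀, hi₀⟩ : ∃ i, σ i ≠ i := by
      by_contra h
      push_neg at h
      exact hσ (Equiv.ext fun i => h i)
    have hdegt : (t σ).intDegree = (∏ i, A (σ i) i).intDegree := by
      rcases Int.units_eq_one_or (Equiv.Perm.sign σ) with hs | hs <;>
        simp [ht, hs, RatFunc.intDegree_neg]
    rw [hdegt, intDegree_prod _ _ fun i _ => hfac i]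
    have key : (∑ i, (A (σ i) i).intDegree)
        = (A (σ i₀) i₀).intDegree + ∑ i ∈ Finset.univ.erase i₀, (A (σ i) i).intDegree :=
      (Finset.add_sum_erase _ _ (Finset.mem_univ i₀)).symm
    rw [key]
    have h1 : (A (σ i₀) i₀).intDegree ≤ 0 := hoff _ _ hi₀ (hfac i₀)
    have h2 : (∑ i ∈ Finset.univ.erase i₀, (A (σ i) i).intDegree) ≤ (n : ℤ) - 1 := by
      calc (∑ i ∈ Finset.univ.erase i₀, (A (σ i) i).intDegree)
          ≤ ∑ _i ∈ Finset.univ.erase i₀, (1 : ℤ) :=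
            Finset.sum_le_sum fun i _ => hentry _ _ (hfac i)
        _ = ((Finset.univ.erase i₀).card : ℤ) := by simp
        _ = (n : ℤ) - 1 := by
            rw [Finset.card_erase_of_mem (Finset.mem_univ i₀)]
            simp [Finset.card_univ]
            omega
    omega
  intro hdet0
  rw [hdet, ← Finset.add_sum_erase Finset.univ t (Finset.mem_univ 1)] at hdet0
  have hrest : (∑ σ ∈ Finset.univ.erase 1, t σ) = - t 1 := by linear_combination hdet0
  have hrne : (∑ σ ∈ Finset.univ.erase 1, t σ) ≠ 0 := by
    rw [hrest]; simpa using hid.1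
  have hle := intDegree_sum_le (Finset.univ.erase 1) t ((n : ℤ) - 1)
    (fun σ hσ => hne σ (Finset.ne_of_mem_erase hσ)) hrne
  rw [hrest, RatFunc.intDegree_neg, hid.2] at hle
  omega

/-! ### Matrix evaluation lemmas -/

lemma mulVec_apply_eq_sum (A : Matrix (Fin n) (Fin n) (RatFunc ℂ)) (u : Fin n → RatFunc ℂ)
    (i : Fin n) : (A *ᵥ u) i = ∑ j, A i j * u j := rfl

lemma ok_mulVec {lam : ℂ} {A : Matrix (Fin n) (Fin n) (RatFunc ℂ)} {u : Fin n → RatFunc ℂ}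
    (hA : ∀ i j, Ok lam (A i j)) (hu : ∀ i, Ok lam (u i)) (i : Fin n) :
    Ok lam ((A *ᵥ u) i) := by
  rw [mulVec_apply_eq_sum]
  exact ok_sum _ _ fun j _ => ok_mul (hA i j) (hu j)

lemma ev_mulVec {lam : ℂ} {A : Matrix (Fin n) (Fin n) (RatFunc ℂ)} {u : Fin n → RatFunc ℂ}
    (hA : ∀ i j, Ok lam (A i j)) (hu : ∀ i, Ok lam (u i)) (i : Fin n) :
    ev lam ((A *ᵥ u) i) = ((evalMat A lam) *ᵥ (fun j => ev lam (u j))) i := by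
  rw [mulVec_apply_eq_sum, ev_sum _ _ fun j _ => ok_mul (hA i j) (hu j)]
  rw [show ((evalMat A lam) *ᵥ (fun j => ev lam (u j))) i
    = ∑ j, evalMat A lam i j * ev lam (u j) from rfl]
  exact Finset.sum_congr rfl fun j _ => ev_mul (hA i j) (hu j)

lemma evalMat_one (lam : ℂ) :
    evalMat (1 : Matrix (Fin n) (Fin n) (RatFunc ℂ)) lam = 1 := by
  ext i j
  by_cases h : i = j <;>
    simp [evalMat, Matrix.one_apply, h, ev_one, ev_zero]

lemma evalMat_mul {lam : ℂ} {P Q : Matrix (Fin n) (Fin n) (RatFunc ℂ)}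
    (hP : ∀ i j, Ok lam (P i j)) (hQ : ∀ i j, Ok lam (Q i j)) :
    evalMat (P * Q) lam = evalMat P lam * evalMat Q lam := by
  ext i j
  show ev lam ((P * Q) i j) = _
  rw [Matrix.mul_apply, ev_sum _ _ fun k _ => ok_mul (hP i k) (hQ k j)]
  rw [Matrix.mul_apply]
  exact Finset.sum_congr rfl fun k _ => ev_mul (hP i k) (hQ k j)

/-! ### The finite-dimensional norm lemma -/

lemma norm_lemma (B C : Matrix (Fin n) (Fin n) ℂ) (hBC : B * C = 1) (hCB : C * B = 1)
    {eps : ℝ} (heps : 0 < eps) :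
    (∃ v : EuclideanSpace ℂ (Fin n), ‖v‖ = 1 ∧
      ‖(WithLp.equiv 2 (Fin n → ℂ)).symm (B.mulVec (fun i => v i))‖ < eps)
      ↔ eps⁻¹ < l2OpNorm C := by
  set T := LinearMap.toContinuousLinearMap (Matrix.toEuclideanLin C) with hT
  have Tapp : ∀ w : EuclideanSpace ℂ (Fin n),
      T w = (WithLp.equiv 2 (Fin n → ℂ)).symm (C.mulVec (fun i => w i)) := fun w => rfl
  constructor
  · rintro ⟨v, hv1, hvB⟩
    set u : EuclideanSpace ℂ (Fin n) :=
      (WithLp.equiv 2 (Fin n → ℂ)).symm (B.mulVec (fun i => v i)) with hu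
    have hTu : T u = v := by
      rw [Tapp]
      have : C.mulVec (fun i => u i) = fun i => v i := by
        show C.mulVec (B.mulVec (fun i => v i)) = _
        rw [Matrix.mulVec_mulVec, hCB, Matrix.one_mulVec]
      rw [this]
      rfl
    have h1 : (1 : ℝ) ≤ ‖T‖ * ‖u‖ := by
      calc (1:ℝ) = ‖v‖ := hv1.symm
        _ = ‖T u‖ := by rw [hTu]
        _ ≤ ‖T‖ * ‖u‖ := T.le_opNorm u
    have hTpos : 0 < ‖T‖ := by
      by_contra h
      push_neg at h
      nlinarith [norm_nonneg u]
    have : (1:ℝ) < ‖T‖ * eps := lt_of_le_of_lt h1 (mul_lt_mul_of_pos_left hvB hTpos)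
    rw [l2OpNorm, ← hT]
    rw [inv_lt_iff_one_lt_mul₀ heps]
    linarith [this]
  · intro hlt
    have hex : ∃ u : EuclideanSpace ℂ (Fin n), eps⁻¹ * ‖u‖ < ‖T u‖ := by
      by_contra h
      push_neg at h
      have : ‖T‖ ≤ eps⁻¹ :=
        T.opNorm_le_bound (le_of_lt (inv_pos.mpr heps)) fun x => h x
      rw [l2OpNorm, ← hT] at hlt
      linarith
    obtain ⟨u, hu⟩ := hex
    have hTu0 : T u ≠ 0 := by
      intro h0
      rw [h0, norm_zero] at hu
      nlinarith [norm_nonneg u, inv_pos.mpr heps]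
    set y := T u with hy
    have hyn : 0 < ‖y‖ := norm_pos_iff.mpr hTu0
    refine ⟨(‖y‖⁻¹ : ℂ) • y, ?_, ?_⟩
    · rw [norm_smul]
      simp [norm_inv, hyn.ne']
    · have hmv : B.mulVec (fun i => ((‖y‖⁻¹ : ℂ) • y) i) =
          (‖y‖⁻¹ : ℂ) • (fun i => u i) := by
        have h2 : (fun i => y i) = C.mulVec (fun i => u i) := by rw [hy, Tapp]; rfl
        have h3 : B.mulVec (fun i => y i) = fun i => u i := by
          rw [h2, Matrix.mulVec_mulVec, hBC, Matrix.one_mulVec]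
        calc B.mulVec (fun i => ((‖y‖⁻¹ : ℂ) • y) i)
            = B.mulVec ((‖y‖⁻¹ : ℂ) • fun i => y i) := rfl
          _ = (‖y‖⁻¹ : ℂ) • B.mulVec (fun i => y i) := Matrix.mulVec_smul _ _ _
          _ = (‖y‖⁻¹ : ℂ) • (fun i => u i) := by rw [h3]
      rw [hmv]
      have h4 : ‖(WithLp.equiv 2 (Fin n → ℂ)).symm ((‖y‖⁻¹ : ℂ) • (fun i => u i))‖
          = ‖y‖⁻¹ * ‖u‖ := by
        have h5 : (WithLp.equiv 2 (Fin n → ℂ)).symm ((‖y‖⁻¹ : ℂ) • (fun i => u i))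
            = (‖y‖⁻¹ : ℂ) • u := rfl
        rw [h5, norm_smul]
        simp
      rw [h4, inv_mul_lt_iff₀ hyn]
      calc ‖u‖ ≤ eps * (eps⁻¹ * ‖u‖) := by
            rw [← mul_assoc, mul_inv_cancel₀ heps.ne', one_mul]
        _ < eps * ‖y‖ := mul_lt_mul_of_pos_left hu heps
        _ = ‖y‖ * eps := mul_comm _ _

/-! ### Topology lemmas -/

lemma isOpen_ok (f : RatFunc ℂ) : IsOpen {lam : ℂ | Ok lam f} := by
  have : {lam : ℂ | Ok lam f} = (fun lam => f.denom.eval lam) ⁻¹' ({0}ᶜ) := rfl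
  rw [this]
  exact (f.denom.continuous).isOpen_preimage _ (isOpen_compl_singleton)

lemma continuousOn_ev (f : RatFunc ℂ) :
    ContinuousOn (fun lam => ev lam f) {lam : ℂ | Ok lam f} := by
  have : (fun lam => ev lam f)
      = fun lam => f.num.eval lam / f.denom.eval lam := rfl
  rw [this]
  exact ((f.num.continuous).continuousOn).div ((f.denom.continuous).continuousOn)
    fun x hx => hx

lemma continuous_l2OpNorm :
    Continuous fun A : Matrix (Fin n) (Fin n) ℂ => l2OpNorm A := by
  have : Continuous fun A : Matrix (Fin n) (Fin n) ℂ =>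
      LinearMap.toContinuousLinearMap (Matrix.toEuclideanLin A) := by
    exact LinearMap.continuous_of_finiteDimensional
      ((LinearMap.toContinuousLinearMap :
          (EuclideanSpace ℂ (Fin n) →ₗ[ℂ] EuclideanSpace ℂ (Fin n))
            ≃ₗ[ℂ] (EuclideanSpace ℂ (Fin n) →L[ℂ] EuclideanSpace ℂ (Fin n))).toLinearMap
        ∘ₗ (Matrix.toEuclideanLin :
            Matrix (Fin n) (Fin n) ℂ ≃ₗ[ℂ]
              (EuclideanSpace ℂ (Fin n) →ₗ[ℂ] EuclideanSpace ℂ (Fin n))).toLinearMap)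
  exact continuous_norm.comp this

lemma closure_diff_finite {S Z : Set ℂ} (hS : IsOpen S) (hZ : Z.Finite) :
    closure S = closure (S \ Z) := by
  refine le_antisymm ?_ (closure_mono Set.diff_subset)
  have hsub : S ⊆ closure (S \ Z) := by
    intro x hx
    rw [mem_closure_iff_nhds]
    intro U hU
    have hUS : U ∩ S ∈ nhds x := Filter.inter_mem hU (hS.mem_nhds hx)
    have hinf : (U ∩ S).Infinite := infinite_of_mem_nhds x hUS
    obtain ⟨y, hy⟩ := (hinf.diff hZ).nonempty
    exact ⟨y, hy.1.1, hy.1.2, hy.2⟩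
  calc closure S ⊆ closure (closure (S \ Z)) := closure_mono hsub
    _ = closure (S \ Z) := closure_closure

end PS

theorem pseudoSpec_perturbation_eq_resolvent {n : ℕ}
    (M : Matrix (Fin n) (Fin n) (RatFunc ℂ))
    (hdeg : ∀ i j, (M i j).intDegree ≤ 0)
    (eps : ℝ) (heps : 0 < eps) :
    closure {lam : ℂ | ∃ v : EuclideanSpace ℂ (Fin n), ‖v‖ = 1 ∧
      (∀ i, ((((M - (RatFunc.X : RatFunc ℂ) • 1).mulVec
          (fun i => RatFunc.C (v i))) i).denom).eval lam ≠ 0) ∧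
      ‖(WithLp.equiv 2 (Fin n → ℂ)).symm (fun i => RatFunc.eval (RingHom.id ℂ) lam
          (((M - (RatFunc.X : RatFunc ℂ) • 1).mulVec (fun i => RatFunc.C (v i))) i))‖ < eps}
      = pseudoSpec M eps := by
  classical
  set A := M - (RatFunc.X : RatFunc ℂ) • 1 with hA
  set N := A⁻¹ with hN
  have hdet : IsUnit A.det := (PS.det_ne_zero hdeg).isUnit
  have hAN : A * N = 1 := Matrix.mul_nonsing_inv A hdet
  have hNA : N * A = 1 := Matrix.nonsing_inv_mul A hdet
  -- the exceptional finite set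
  set Z : Set ℂ := (⋃ i, ⋃ j, {lam : ℂ | (M i j).denom.eval lam = 0}) ∪
    (⋃ i, ⋃ j, {lam : ℂ | (N i j).denom.eval lam = 0}) with hZdef
  have hZ : Z.Finite := by
    apply Set.Finite.union <;>
    · apply Set.finite_iUnion
      intro i
      apply Set.finite_iUnion
      intro j
      exact Polynomial.finite_setOf_isRoot (RatFunc.denom_ne_zero _)
  have hZc : ∀ lam : ℂ, lam ∉ Z ↔
      ((∀ i j, PS.Ok lam (M i j)) ∧ (∀ i j, PS.Ok lam (N i j))) := by
    intro lam
    simp only [hZdef, Set.mem_union, Set.mem_iUnion, Set.mem_setOf_eq, not_or, not_exists]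
    constructor
    · rintro ⟨h1, h2⟩
      exact ⟨fun i j => h1 i j, fun i j => h2 i j⟩
    · rintro ⟨h1, h2⟩
      exact ⟨fun i j => h1 i j, fun i j => h2 i j⟩
  -- the two sets
  set S1 : Set ℂ := {lam : ℂ | ∃ v : EuclideanSpace ℂ (Fin n), ‖v‖ = 1 ∧
      (∀ i, (((A.mulVec (fun i => RatFunc.C (v i))) i).denom).eval lam ≠ 0) ∧
      ‖(WithLp.equiv 2 (Fin n → ℂ)).symm (fun i => RatFunc.eval (RingHom.id ℂ) lam
          ((A.mulVec (fun i => RatFunc.C (v i))) i))‖ < eps} with hS1def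
  set S2 : Set ℂ := {lam : ℂ |
    (∀ i j, (N i j).denom.eval lam ≠ 0) ∧
    eps⁻¹ < l2OpNorm (evalMat N lam)} with hS2def
  have hgoal : pseudoSpec M eps = closure S2 := rfl
  rw [hgoal]
  -- openness of S2
  have hS2open : IsOpen S2 := by
    have hU : IsOpen {lam : ℂ | ∀ i j, PS.Ok lam (N i j)} := by
      have : {lam : ℂ | ∀ i j, PS.Ok lam (N i j)}
          = ⋂ i, ⋂ j, {lam : ℂ | PS.Ok lam (N i j)} := by
        ext lam; simp [Set.mem_iInter]
      rw [this]
      exact isOpen_iInter_of_finite fun i => isOpen_iInter_of_finite fun j => PS.isOpen_ok _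
    have hcont : ContinuousOn (fun lam => l2OpNorm (evalMat N lam))
        {lam : ℂ | ∀ i j, PS.Ok lam (N i j)} := by
      apply PS.continuous_l2OpNorm.comp_continuousOn
      apply continuousOn_pi.mpr
      intro i
      apply continuousOn_pi.mpr
      intro j
      exact (PS.continuousOn_ev (N i j)).mono fun lam h => h i j
    have heq : S2 = {lam : ℂ | ∀ i j, PS.Ok lam (N i j)} ∩
        (fun lam => l2OpNorm (evalMat N lam)) ⁻¹' (Set.Ioi eps⁻¹) := by
      ext lam
      simp only [hS2def, Set.mem_setOf_eq, Set.mem_inter_iff, Set.mem_preimage, Set.mem_Ioi]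
      exact Iff.rfl
    rw [heq]
    exact hcont.isOpen_inter_preimage hU isOpen_Ioi
  -- openness of S1
  have hS1open : IsOpen S1 := by
    have : S1 = ⋃ v : EuclideanSpace ℂ (Fin n),
        {lam : ℂ | ‖v‖ = 1 ∧
          (∀ i, PS.Ok lam ((A.mulVec (fun i => RatFunc.C (v i))) i)) ∧
          ‖(WithLp.equiv 2 (Fin n → ℂ)).symm (fun i => PS.ev lam
              ((A.mulVec (fun i => RatFunc.C (v i))) i))‖ < eps} := by
      ext lam
      simp only [hS1def, Set.mem_setOf_eq, Set.mem_iUnion]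
      rfl
    rw [this]
    apply isOpen_iUnion
    intro v
    by_cases hv : ‖v‖ = 1
    · have hU : IsOpen {lam : ℂ | ∀ i, PS.Ok lam ((A.mulVec (fun i => RatFunc.C (v i))) i)} := by
        have : {lam : ℂ | ∀ i, PS.Ok lam ((A.mulVec (fun i => RatFunc.C (v i))) i)}
            = ⋂ i, {lam : ℂ | PS.Ok lam ((A.mulVec (fun i => RatFunc.C (v i))) i)} := by
          ext lam; simp [Set.mem_iInter]
        rw [this]
        exact isOpen_iInter_of_finite fun i => PS.isOpen_ok _
      have hcont : ContinuousOn (fun lam =>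
          ‖(WithLp.equiv 2 (Fin n → ℂ)).symm (fun i => PS.ev lam
              ((A.mulVec (fun i => RatFunc.C (v i))) i))‖)
          {lam : ℂ | ∀ i, PS.Ok lam ((A.mulVec (fun i => RatFunc.C (v i))) i)} := by
        apply ContinuousOn.norm
        apply Continuous.comp_continuousOn (PiLp.continuous_toLp 2 (fun _ : Fin n => ℂ))
        apply continuousOn_pi.mpr
        intro i
        exact (PS.continuousOn_ev _).mono fun lam h => h i
      have heq : {lam : ℂ | ‖v‖ = 1 ∧
          (∀ i, PS.Ok lam ((A.mulVec (fun i => RatFunc.C (v i))) i)) ∧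
          ‖(WithLp.equiv 2 (Fin n → ℂ)).symm (fun i => PS.ev lam
              ((A.mulVec (fun i => RatFunc.C (v i))) i))‖ < eps}
          = {lam : ℂ | ∀ i, PS.Ok lam ((A.mulVec (fun i => RatFunc.C (v i))) i)} ∩
            (fun lam => ‖(WithLp.equiv 2 (Fin n → ℂ)).symm (fun i => PS.ev lam
              ((A.mulVec (fun i => RatFunc.C (v i))) i))‖) ⁻¹' (Set.Iio eps) := by
        ext lam
        simp only [Set.mem_setOf_eq, Set.mem_inter_iff, Set.mem_preimage, Set.mem_Iio, hv,
          true_and]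
      rw [heq]
      exact hcont.isOpen_inter_preimage hU isOpen_Iio
    · have : {lam : ℂ | ‖v‖ = 1 ∧
          (∀ i, PS.Ok lam ((A.mulVec (fun i => RatFunc.C (v i))) i)) ∧
          ‖(WithLp.equiv 2 (Fin n → ℂ)).symm (fun i => PS.ev lam
              ((A.mulVec (fun i => RatFunc.C (v i))) i))‖ < eps} = ∅ := by
        ext lam
        simp [hv]
      rw [this]
      exact isOpen_empty
  -- pointwise equivalence off Z
  have hokA : ∀ lam : ℂ, (∀ i j, PS.Ok lam (M i j)) → ∀ i j, PS.Ok lam (A i j) := by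
    intro lam okM i j
    rw [hA, PS.apply_sub_smul]
    by_cases h : i = j
    · rw [if_pos h]; exact PS.ok_sub (okM i j) (PS.ok_X lam)
    · rw [if_neg h]; exact PS.ok_sub (okM i j) (PS.ok_zero lam)
  have hkey : S1 \ Z = S2 \ Z := by
    ext lam
    simp only [Set.mem_diff]
    constructor
    · rintro ⟨h1, hz⟩
      obtain ⟨okM, okN⟩ := (hZc lam).mp hz
      have okA := hokA lam okM
      have hBC : evalMat A lam * evalMat N lam = 1 := by
        rw [← PS.evalMat_mul okA okN, hAN, PS.evalMat_one]
      have hCB : evalMat N lam * evalMat A lam = 1 := by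
        rw [← PS.evalMat_mul okN okA, hNA, PS.evalMat_one]
      obtain ⟨v, hv1, hok, hlt⟩ := h1
      refine ⟨⟨fun i j => okN i j, ?_⟩, hz⟩
      rw [← PS.norm_lemma (evalMat A lam) (evalMat N lam) hBC hCB heps]
      refine ⟨v, hv1, ?_⟩
      have hvec : (fun i => RatFunc.eval (RingHom.id ℂ) lam
            ((A.mulVec (fun i => RatFunc.C (v i))) i))
          = (evalMat A lam).mulVec (fun i => v i) := by
        funext i
        rw [show RatFunc.eval (RingHom.id ℂ) lam ((A.mulVec (fun i => RatFunc.C (v i))) i)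
            = PS.ev lam ((A.mulVec (fun i => RatFunc.C (v i))) i) from rfl,
          PS.ev_mulVec okA (fun j => PS.ok_C lam (v j)) i]
        congr 1
        funext j
        exact PS.ev_C lam (v j)
      rw [← hvec]
      exact hlt
    · rintro ⟨h2, hz⟩
      obtain ⟨okM, okN⟩ := (hZc lam).mp hz
      have okA := hokA lam okM
      have hBC : evalMat A lam * evalMat N lam = 1 := by
        rw [← PS.evalMat_mul okA okN, hAN, PS.evalMat_one]
      have hCB : evalMat N lam * evalMat A lam = 1 := by
        rw [← PS.evalMat_mul okN okA, hNA, PS.evalMat_one]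
      obtain ⟨v, hv1, hlt⟩ :=
        (PS.norm_lemma (evalMat A lam) (evalMat N lam) hBC hCB heps).mpr h2.2
      refine ⟨⟨v, hv1, ?_, ?_⟩, hz⟩
      · exact fun i => PS.ok_mulVec okA (fun j => PS.ok_C lam (v j)) i
      · have hvec : (fun i => RatFunc.eval (RingHom.id ℂ) lam
              ((A.mulVec (fun i => RatFunc.C (v i))) i))
            = (evalMat A lam).mulVec (fun i => v i) := by
          funext i
          rw [show RatFunc.eval (RingHom.id ℂ) lam ((A.mulVec (fun i => RatFunc.C (v i))) i)
              = PS.ev lam ((A.mulVec (fun i => RatFunc.C (v i))) i) from rfl,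
            PS.ev_mulVec okA (fun j => PS.ok_C lam (v j)) i]
          congr 1
          funext j
          exact PS.ev_C lam (v j)
        rw [hvec]
        exact hlt
  calc closure S1 = closure (S1 \ Z) := PS.closure_diff_finite hS1open hZ
    _ = closure (S2 \ Z) := by rw [hkey]
    _ = closure S2 := (PS.closure_diff_finite hS2open hZ).symm
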